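/- arXiv:2305.17592 — 2 statements merged into one kernel-verified Lean document; each statement's English description precedes it below -/
import Mathlib

section
/- Lower covering bound for group actions: let Z be a metric space, S a set of injective transformations of Z with metric d_G, and Z₀ ⊆ Z such that for some L > 0: (1) d(z₀, z₀') ≤ L·d(g·z₀, g·z₀') for all z₀, z₀' ∈ Z₀ and g ∈ S, and (2) d_G(g, g') ≤ L·dist(g·Z₀, g'·Z₀) for all g, g' ∈ S, where dist denotes the infimum distance between the two image sets. Then for every δ > 0, N(Z₀, 2δL)·N(S, 2δL) ≤ N(Z, δ). -/
/-- The covering number of a subset `s` of a metric space. -/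
noncomputable def coveringNumber {X : Type*} [MetricSpace X] (s : Set X) (ε : ℝ) : ℕ∞ :=
  sInf {n : ℕ∞ | ∃ t : Finset X, (t.card : ℕ∞) = n ∧ ∀ x ∈ s, ∃ c ∈ t, dist x c ≤ ε}

/-- Lower covering bound for group actions. If the action of each
`g ∈ S` expands distances between orbit representatives by a factor at least
`1/L`, and distinct `g, g'` move `Z₀` to sets that are `d_G(g,g')/L`-separated
(i.e. `d_G(g,g') ≤ L · dist(g·Z₀, g'·Z₀)`, stated here for every pair of image
points), then `N(Z₀, 2δL) · N(S, 2δL) ≤ N(Z, δ)`. -/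
theorem coveringNumber_lower_bound {Z S : Type*} [MetricSpace Z] [MetricSpace S]
    (act : S → Z → Z) (hinj : ∀ g : S, Function.Injective (act g))
    (Z₀ : Set Z)
    (L : ℝ) (hL : 0 < L)
    (h1 : ∀ z₀ ∈ Z₀, ∀ z₀' ∈ Z₀, ∀ g : S,
      dist z₀ z₀' ≤ L * dist (act g z₀) (act g z₀'))
    (h2 : ∀ g g' : S, ∀ z₀ ∈ Z₀, ∀ z₀' ∈ Z₀,
      dist g g' ≤ L * dist (act g z₀) (act g' z₀'))
    (δ : ℝ) (hδ : 0 < δ) :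
    coveringNumber Z₀ (2 * δ * L) * coveringNumber (Set.univ : Set S) (2 * δ * L) ≤
      coveringNumber (Set.univ : Set Z) δ := by
  classical
  have hε : 0 < 2 * δ * L := by positivity
  apply le_sInf
  rintro n ⟨T, hTcard, hTcov⟩
  rw [← hTcard]
  by_cases hZ₀ : Z₀.Nonempty
  swap
  · have h0 : coveringNumber Z₀ (2 * δ * L) = 0 := by
      refine le_antisymm (sInf_le ⟨∅, by simp, fun x hx => absurd ⟨x, hx⟩ hZ₀⟩) zero_le
    simp [h0]
  by_cases hS : Nonempty S
  swap
  · have h0 : coveringNumber (Set.univ : Set S) (2 * δ * L) = 0 := by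
      refine le_antisymm (sInf_le ⟨∅, by simp, fun x _ => absurd ⟨x⟩ hS⟩) zero_le
    simp [h0]
  obtain ⟨z₀d, hz₀d⟩ := hZ₀
  set P : S → Z → Prop := fun g t => ∃ z₀ ∈ Z₀, dist (act g z₀) t ≤ δ with hP
  set Tg : S → Finset Z := fun g => T.filter (P g) with hTg
  have hTgsub : ∀ g, Tg g ⊆ T := fun g => Finset.filter_subset _ _
  -- witness function
  set w : S → Z → Z := fun g t => if h : P g t then h.choose else z₀d with hwdef
  have hw : ∀ g t, P g t → w g t ∈ Z₀ ∧ dist (act g (w g t)) t ≤ δ := by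
    intro g t h
    simp only [hwdef, dif_pos h]
    exact ⟨h.choose_spec.1, h.choose_spec.2⟩
  -- Claim A : covering number of Z₀ is at most card (Tg g) for every g
  have hA : ∀ g, coveringNumber Z₀ (2 * δ * L) ≤ ((Tg g).card : ℕ∞) := by
    intro g
    have hle : coveringNumber Z₀ (2 * δ * L) ≤ (((Tg g).image (w g)).card : ℕ∞) := by
      apply sInf_le
      refine ⟨(Tg g).image (w g), rfl, ?_⟩
      intro z₀ hz₀
      obtain ⟨t, ht, hdt⟩ := hTcov (act g z₀) (Set.mem_univ _)
      have hPt : P g t := ⟨z₀, hz₀, hdt⟩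
      have htg : t ∈ Tg g := Finset.mem_filter.2 ⟨ht, hPt⟩
      refine ⟨w g t, Finset.mem_image_of_mem _ htg, ?_⟩
      have hwt := hw g t hPt
      calc dist z₀ (w g t) ≤ L * dist (act g z₀) (act g (w g t)) := h1 z₀ hz₀ _ hwt.1 g
        _ ≤ L * (dist (act g z₀) t + dist t (act g (w g t))) :=
            mul_le_mul_of_nonneg_left (dist_triangle _ _ _) hL.le
        _ ≤ L * (δ + δ) :=
            mul_le_mul_of_nonneg_left
              (add_le_add hdt (by rw [dist_comm]; exact hwt.2)) hL.le
        _ = 2 * δ * L := by ring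
    exact hle.trans (by exact_mod_cast Finset.card_image_le)
  -- N is finite
  have g₀ : S := Classical.arbitrary S
  have hNne : coveringNumber Z₀ (2 * δ * L) ≠ ⊤ :=
    ne_top_of_le_ne_top (by exact_mod_cast ENat.coe_ne_top _) (hA g₀)
  set N' : ℕ := (coveringNumber Z₀ (2 * δ * L)).toNat with hN'def
  have hN' : (N' : ℕ∞) = coveringNumber Z₀ (2 * δ * L) := ENat.coe_toNat hNne
  have hN'le : ∀ g, N' ≤ (Tg g).card := by
    intro g
    have := hA g
    rw [← hN'] at this
    exact_mod_cast this
  have hN'pos : 1 ≤ N' := by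
    have h1N : (1 : ℕ∞) ≤ coveringNumber Z₀ (2 * δ * L) := by
      apply le_sInf
      rintro m ⟨t, htm, htcov⟩
      obtain ⟨c, hc, -⟩ := htcov z₀d hz₀d
      rw [← htm]
      exact_mod_cast Finset.card_pos.2 ⟨c, hc⟩
    rw [← hN'] at h1N
    exact_mod_cast h1N
  -- disjointness of tiles for well-separated group elements
  have hdisj : ∀ g g' : S, 2 * δ * L < dist g g' → Disjoint (Tg g) (Tg g') := by
    intro g g' hgg'
    rw [Finset.disjoint_left]
    intro t htg htg'
    obtain ⟨-, z₀, hz₀, hd⟩ := Finset.mem_filter.1 htg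
    obtain ⟨-, z₀', hz₀', hd'⟩ := Finset.mem_filter.1 htg'
    have hle : dist g g' ≤ 2 * δ * L := by
      calc dist g g' ≤ L * dist (act g z₀) (act g' z₀') := h2 g g' z₀ hz₀ z₀' hz₀'
        _ ≤ L * (dist (act g z₀) t + dist t (act g' z₀')) :=
            mul_le_mul_of_nonneg_left (dist_triangle _ _ _) hL.le
        _ ≤ L * (δ + δ) :=
            mul_le_mul_of_nonneg_left
              (add_le_add hd (by rw [dist_comm]; exact hd')) hL.le
        _ = 2 * δ * L := by ring
    linarith
  -- counting: any separated finset F satisfies N' * F.card ≤ T.card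
  set sep : Finset S → Prop := fun F => ∀ g ∈ F, ∀ g' ∈ F, g ≠ g' → 2 * δ * L < dist g g'
    with hsepdef
  have hcount : ∀ F : Finset S, sep F → N' * F.card ≤ T.card := by
    intro F hF
    calc N' * F.card = ∑ _g ∈ F, N' := by rw [Finset.sum_const, smul_eq_mul, mul_comm]
      _ ≤ ∑ g ∈ F, (Tg g).card := Finset.sum_le_sum (fun g _ => hN'le g)
      _ = (F.biUnion Tg).card :=
          (Finset.card_biUnion (fun g hg g' hg' hne => hdisj g g' (hF g hg g' hg' hne))).symm
      _ ≤ T.card := Finset.card_le_card (Finset.biUnion_subset.2 (fun g _ => hTgsub g))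
  have hcardle : ∀ F : Finset S, sep F → F.card ≤ T.card := by
    intro F hF
    calc F.card = 1 * F.card := (one_mul _).symm
      _ ≤ N' * F.card := Nat.mul_le_mul_right _ hN'pos
      _ ≤ T.card := hcount F hF
  -- maximal separated set
  set Q : ℕ → Prop := fun m => ∃ F : Finset S, sep F ∧ F.card = m with hQdef
  have hQ0 : Q 0 := ⟨∅, by intro g hg; simp at hg, rfl⟩
  have hk : Q (Nat.findGreatest Q T.card) := Nat.findGreatest_spec (Nat.zero_le _) hQ0
  obtain ⟨F, hFsep, hFcard⟩ := hk
  have hmax : ∀ F' : Finset S, sep F' → F'.card ≤ F.card := by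
    intro F' hF'
    by_contra hcon
    push_neg at hcon
    rw [hFcard] at hcon
    exact Nat.findGreatest_is_greatest hcon (hcardle F' hF') ⟨F', hF', rfl⟩
  -- F is a (2δL)-cover of S
  have hcover : ∀ g : S, ∃ g' ∈ F, dist g g' ≤ 2 * δ * L := by
    intro g
    by_contra hcon
    push_neg at hcon
    have hgF : g ∉ F := by
      intro hg
      have := hcon g hg
      simp only [dist_self] at this
      linarith
    have hsep' : sep (insert g F) := by
      intro a ha b hb hab
      rcases Finset.mem_insert.1 ha with h₁ | h₁ <;>
        rcases Finset.mem_insert.1 hb with h₂ | h₂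
      · exact absurd (h₁.trans h₂.symm) hab
      · subst h₁; exact hcon b h₂
      · subst h₂; rw [dist_comm]; exact hcon a h₁
      · exact hFsep a h₁ b h₂ hab
    have := hmax _ hsep'
    rw [Finset.card_insert_of_notMem hgF] at this
    omega
  have hM : coveringNumber (Set.univ : Set S) (2 * δ * L) ≤ (F.card : ℕ∞) :=
    sInf_le ⟨F, rfl, fun g _ => hcover g⟩
  calc coveringNumber Z₀ (2 * δ * L) * coveringNumber (Set.univ : Set S) (2 * δ * L)
      ≤ (N' : ℕ∞) * (F.card : ℕ∞) := by rw [hN']; exact mul_le_mul' le_rfl hM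
    _ = ((N' * F.card : ℕ) : ℕ∞) := by push_cast; ring
    _ ≤ (T.card : ℕ∞) := by exact_mod_cast hcount F hFsep
end

section
/- Corollary of the product covering bound: under hypotheses (1) d(z₀,z₀') ≤ L·d(g·z₀, g·z₀') for all z₀,z₀' ∈ Z₀_ε and g ∈ Stab_ε, and (2) d_G(g,g') ≤ L·dist(g·Z₀_ε, g'·Z₀_ε) for all g,g' ∈ Stab_ε, the covering numbers satisfy N(Z₀_ε, δ) ≤ N(Z, δ/(2L)) / N(Stab_ε, δ) for every δ > 0, provided N(Stab_ε, δ) is finite and positive. -/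
open scoped ENNReal

section Aux

variable {X : Type*} [MetricSpace X]

/-- A maximal strictly-`δ`-separated finite subset of `A` exists (given a bound on the
cardinality of separated sets) and it is a `δ`-cover of `A`. -/
private lemma exists_maximal_separated (A : Set X) (a : X) (ha : a ∈ A) {δ : ℝ} (hδ : 0 < δ)
    (m : ℕ)
    (hbd : ∀ Q : Finset X, ↑Q ⊆ A → (∀ x ∈ Q, ∀ y ∈ Q, x ≠ y → δ < dist x y) → Q.card ≤ m) :
    ∃ Q : Finset X, ↑Q ⊆ A ∧ (∀ x ∈ Q, ∀ y ∈ Q, x ≠ y → δ < dist x y) ∧ Q.Nonempty ∧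
      ∀ x ∈ A, ∃ c ∈ Q, dist x c ≤ δ := by
  classical
  set s : Set ℕ := {n | ∃ Q : Finset X, ↑Q ⊆ A ∧
    (∀ x ∈ Q, ∀ y ∈ Q, x ≠ y → δ < dist x y) ∧ Q.card = n} with hs
  have h1s : (1 : ℕ) ∈ s := by
    refine ⟨{a}, ?_, ?_, by simp⟩
    · simpa using ha
    · intro x hx y hy hxy
      simp only [Finset.mem_singleton] at hx hy
      exact absurd (hx.trans hy.symm) hxy
  have hne : s.Nonempty := ⟨1, h1s⟩
  have hbdd : BddAbove s := by
    refine ⟨m, fun n hn => ?_⟩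
    obtain ⟨Q, hQA, hQsep, hQc⟩ := hn
    exact hQc ▸ hbd Q hQA hQsep
  obtain ⟨Q, hQA, hQsep, hQc⟩ := Nat.sSup_mem hne hbdd
  refine ⟨Q, hQA, hQsep, ?_, ?_⟩
  · rw [← Finset.card_pos, hQc]
    exact le_csSup hbdd h1s
  · intro x hx
    by_contra hcon
    push_neg at hcon
    have hxQ : x ∉ Q := by
      intro hxQ
      have := hcon x hxQ
      simp only [dist_self] at this
      linarith
    have : sSup s + 1 ∈ s := by
      refine ⟨insert x Q, ?_, ?_, by rw [Finset.card_insert_of_notMem hxQ, hQc]⟩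
      · intro y hy
        rcases Finset.mem_insert.mp hy with rfl | hy
        · exact hx
        · exact hQA hy
      · intro y hy z hz hyz
        rcases Finset.mem_insert.mp hy with hy' | hy' <;>
          rcases Finset.mem_insert.mp hz with hz' | hz'
        · exact absurd (hy'.trans hz'.symm) hyz
        · subst hy'; exact hcon z hz'
        · subst hz'; rw [dist_comm]; exact hcon y hy'
        · exact hQsep y hy' z hz' hyz
    have := le_csSup hbdd this
    omega

/-- The counting lemma: the product of a separated set in `S` and a separated set in
`Z₀ε` injects into any `δ/(2L)`-cover of `Z`. -/
private lemma count_le {Z S : Type*} [MetricSpace Z] [MetricSpace S]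
    (act : S → Z → Z) (Z₀ε : Set Z) (L : ℝ) (hL : 0 < L)
    (h1 : ∀ z₀ ∈ Z₀ε, ∀ z₀' ∈ Z₀ε, ∀ g : S,
      dist z₀ z₀' ≤ L * dist (act g z₀) (act g z₀'))
    (h2 : ∀ g g' : S, ∀ z₀ ∈ Z₀ε, ∀ z₀' ∈ Z₀ε,
      dist g g' ≤ L * dist (act g z₀) (act g' z₀'))
    (δ : ℝ)
    (P : Finset S) (hP : ∀ g ∈ P, ∀ g' ∈ P, g ≠ g' → δ < dist g g')
    (Q : Finset Z) (hQA : ↑Q ⊆ Z₀ε) (hQ : ∀ x ∈ Q, ∀ y ∈ Q, x ≠ y → δ < dist x y)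
    (T : Finset Z) (hT : ∀ x : Z, ∃ c ∈ T, dist x c ≤ δ / (2 * L)) :
    P.card * Q.card ≤ T.card := by
  classical
  have key : ∀ p : S × Z, ∃ c ∈ T, dist (act p.1 p.2) c ≤ δ / (2 * L) := fun p => hT _
  choose f hfT hfd using key
  have hcard := Finset.card_le_card_of_injOn (s := P ×ˢ Q) f (fun p _ => hfT p) ?_
  · rwa [Finset.card_product] at hcard
  · intro p hp q hq hfpq
    simp only [Finset.coe_product, Set.mem_prod, Finset.mem_coe] at hp hq
    have hd : dist (act p.1 p.2) (act q.1 q.2) ≤ δ / (2 * L) + δ / (2 * L) := by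
      calc dist (act p.1 p.2) (act q.1 q.2)
          ≤ dist (act p.1 p.2) (f p) + dist (f q) (act q.1 q.2) := by
            rw [hfpq]; exact dist_triangle _ _ _
        _ ≤ δ / (2 * L) + δ / (2 * L) := by
            have := hfd q
            rw [dist_comm] at this
            exact add_le_add (hfd p) this
    have hLd : L * (δ / (2 * L) + δ / (2 * L)) = δ := by field_simp; ring
    have hmul := mul_le_mul_of_nonneg_left hd hL.le
    have hg : p.1 = q.1 := by
      by_contra hne
      have := hP p.1 hp.1 q.1 hq.1 hne
      have := h2 p.1 q.1 p.2 (hQA hp.2) q.2 (hQA hq.2)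
      linarith
    have hz : p.2 = q.2 := by
      by_contra hne
      have hsep := hQ p.2 hp.2 q.2 hq.2 hne
      have h1' := h1 p.2 (hQA hp.2) q.2 (hQA hq.2) q.1
      rw [hg] at hd
      have hmul' := mul_le_mul_of_nonneg_left hd hL.le
      linarith
    exact Prod.ext hg hz

end Aux

/-- Corollary of the product covering bound: under the distance
lower bounds (1) and (2) for the action of `Stab_ε` on the set of orbit
representatives `Z₀ε`, one has `N(Z₀ε, δ) ≤ N(Z, δ/(2L)) / N(Stab_ε, δ)`,
provided `N(Stab_ε, δ)` is finite and positive. -/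
theorem coveringNumber_quotient_bound {Z S : Type*} [MetricSpace Z] [MetricSpace S]
    (act : S → Z → Z) (hinj : ∀ g : S, Function.Injective (act g))
    (Z₀ε : Set Z)
    (L : ℝ) (hL : 0 < L)
    (h1 : ∀ z₀ ∈ Z₀ε, ∀ z₀' ∈ Z₀ε, ∀ g : S,
      dist z₀ z₀' ≤ L * dist (act g z₀) (act g z₀'))
    (h2 : ∀ g g' : S, ∀ z₀ ∈ Z₀ε, ∀ z₀' ∈ Z₀ε,
      dist g g' ≤ L * dist (act g z₀) (act g' z₀'))
    (δ : ℝ) (hδ : 0 < δ)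
    (hpos : 0 < coveringNumber (Set.univ : Set S) δ)
    (hfin : coveringNumber (Set.univ : Set S) δ < ⊤) :
    (coveringNumber Z₀ε δ : ℝ≥0∞) ≤
      (coveringNumber (Set.univ : Set Z) (δ / (2 * L)) : ℝ≥0∞) /
        (coveringNumber (Set.univ : Set S) δ : ℝ≥0∞) := by
  classical
  -- `S` is nonempty
  have hSne : Nonempty S := by
    by_contra h
    rw [not_nonempty_iff] at h
    have h0 : coveringNumber (Set.univ : Set S) δ ≤ 0 := by
      unfold coveringNumber
      exact sInf_le ⟨∅, by simp, fun x _ => (h.false x).elim⟩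
    exact absurd hpos (not_lt.mpr h0)
  obtain ⟨g₀⟩ := hSne
  -- dispose of the case `Z₀ε = ∅`
  rcases Set.eq_empty_or_nonempty Z₀ε with rfl | ⟨z₀, hz₀⟩
  · have h0 : coveringNumber (∅ : Set Z) δ = 0 := by
      refine le_antisymm ?_ zero_le
      unfold coveringNumber
      exact sInf_le ⟨∅, by simp, by simp⟩
    simp [h0]
  -- reduce to a product bound in `ℕ∞`
  rw [ENNReal.le_div_iff_mul_le (Or.inl (by rw [Ne, ← ENat.toENNReal_zero, ENat.toENNReal_inj]; exact hpos.ne'))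
      (Or.inl (by rw [Ne, ← ENat.toENNReal_top, ENat.toENNReal_inj]; exact hfin.ne))]
  rw [← ENat.toENNReal_mul, ENat.toENNReal_le]
  rcases eq_top_or_lt_top (coveringNumber (Set.univ : Set Z) (δ / (2 * L))) with hb | hb
  · rw [hb]; exact le_top
  -- there is a finite `δ/(2L)`-cover `T₀` of `Z`
  unfold coveringNumber at hb
  obtain ⟨n, ⟨T₀, hT₀c, hT₀cov⟩, -⟩ := sInf_lt_iff.mp hb
  have hT₀cov' : ∀ x : Z, ∃ c ∈ T₀, dist x c ≤ δ / (2 * L) := fun x => hT₀cov x trivial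
  set m := T₀.card with hm
  have hsing : ∀ x : S, ∀ g ∈ ({x} : Finset S), ∀ g' ∈ ({x} : Finset S),
      g ≠ g' → δ < dist g g' := by
    intro x g hg g' hg' hne
    simp only [Finset.mem_singleton] at hg hg'
    exact absurd (hg.trans hg'.symm) hne
  have hsingZ : ∀ x : Z, ∀ g ∈ ({x} : Finset Z), ∀ g' ∈ ({x} : Finset Z),
      g ≠ g' → δ < dist g g' := by
    intro x g hg g' hg' hne
    simp only [Finset.mem_singleton] at hg hg'
    exact absurd (hg.trans hg'.symm) hne
  -- separated sets in `Z₀ε` are bounded by `m`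
  have hbdQ : ∀ Q : Finset Z, ↑Q ⊆ Z₀ε →
      (∀ x ∈ Q, ∀ y ∈ Q, x ≠ y → δ < dist x y) → Q.card ≤ m := by
    intro Q hQA hQs
    have := count_le act Z₀ε L hL h1 h2 δ {g₀} (hsing g₀) Q hQA hQs T₀ hT₀cov'
    simpa using this
  -- separated sets in `S` are bounded by `m`
  have hbdP : ∀ P : Finset S, ↑P ⊆ (Set.univ : Set S) →
      (∀ x ∈ P, ∀ y ∈ P, x ≠ y → δ < dist x y) → P.card ≤ m := by
    intro P _ hPs
    have := count_le act Z₀ε L hL h1 h2 δ P hPs {z₀} (by simpa using hz₀) (hsingZ z₀)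
      T₀ hT₀cov'
    simpa using this
  obtain ⟨Q, hQA, hQsep, hQne, hQcov⟩ := exists_maximal_separated Z₀ε z₀ hz₀ hδ m hbdQ
  obtain ⟨P, _, hPsep, hPne, hPcov⟩ :=
    exists_maximal_separated (Set.univ : Set S) g₀ trivial hδ m hbdP
  -- the maximal separated sets are covers
  have hA : coveringNumber Z₀ε δ ≤ (Q.card : ℕ∞) := by
    unfold coveringNumber
    exact sInf_le ⟨Q, rfl, hQcov⟩
  have hC : coveringNumber (Set.univ : Set S) δ ≤ (P.card : ℕ∞) := by
    unfold coveringNumber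
    exact sInf_le ⟨P, rfl, fun x _ => hPcov x trivial⟩
  -- the product of the separated sets bounds every cover of `Z`
  have hB : ((Q.card * P.card : ℕ) : ℕ∞) ≤
      coveringNumber (Set.univ : Set Z) (δ / (2 * L)) := by
    unfold coveringNumber
    refine le_sInf ?_
    rintro k ⟨T, rfl, hTcov⟩
    have := count_le act Z₀ε L hL h1 h2 δ P hPsep Q hQA hQsep T (fun x => hTcov x trivial)
    have h' : Q.card * P.card ≤ T.card := by rw [mul_comm]; exact this
    exact_mod_cast h'
  calc coveringNumber Z₀ε δ * coveringNumber (Set.univ : Set S) δ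
      ≤ (Q.card : ℕ∞) * (P.card : ℕ∞) := mul_le_mul' hA hC
    _ = ((Q.card * P.card : ℕ) : ℕ∞) := by exact_mod_cast (Nat.cast_mul _ _).symm
    _ ≤ _ := hB
end
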